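/- Given any two trees 𝒯_P and 𝒯_Q (connected acyclic simple graphs) on the same set X of n nodes, there exists an ordering X_1, …, X_n of the nodes such that for every i, the set D_{𝒯_P}(X_i) ∪ D_{𝒯_Q}(X_i) has cardinality at most 5. -/

import Mathlib

/-- The *dependent set* `D_G(i)` of the `i`-th node (under the ordering `σ`) with
respect to the graph `G`: the set of indices `k < i` such that the (unique, since `G`
is a tree) path between `σ i` and `σ k` in `G` does not pass through any `σ j` with
`j < i` other than `σ k` itself. -/
def depSet {V : Type*} {n : ℕ} (G : SimpleGraph V) (σ : Fin n ≃ V) (i : Fin n) :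
    Set (Fin n) :=
  {k | k < i ∧ ∀ p : G.Walk (σ i) (σ k), p.IsPath →
    ∀ j : Fin n, j < i → σ j ∈ p.support → j = k}

namespace TwoTreesAux

open SimpleGraph Finset

variable {V : Type*}

/-- `u` and `v` are `S`-adjacent in `T`: both in `S`, distinct, and joined by a path
whose internal vertices avoid `S`. -/
def SAdj (T : SimpleGraph V) (S : Finset V) (u v : V) : Prop :=
  u ∈ S ∧ v ∈ S ∧ u ≠ v ∧ ∃ p : T.Walk u v, p.IsPath ∧
    ∀ x ∈ p.support, x ≠ u → x ≠ v → x ∉ S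

lemma SAdj.symm {T : SimpleGraph V} {S : Finset V} {u v : V} (h : SAdj T S u v) :
    SAdj T S v u := by
  obtain ⟨hu, hv, hne, p, hp, hint⟩ := h
  refine ⟨hv, hu, hne.symm, p.reverse, hp.reverse, fun x hx hxv hxu => ?_⟩
  exact hint x (by simpa using hx) hxu hxv

/-- The set of `S`-neighbours of `v` in `T`. -/
noncomputable def nbr (T : SimpleGraph V) (S : Finset V) (v : V) : Finset V :=
  @Finset.filter _ (fun u => SAdj T S v u) (Classical.decPred _) S

lemma mem_nbr {T : SimpleGraph V} {S : Finset V} {v u : V} :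
    u ∈ nbr T S v ↔ SAdj T S v u := by
  rw [nbr, @Finset.mem_filter _ _ (Classical.decPred _)]
  exact ⟨fun h => h.2, fun h => ⟨h.2.1, h⟩⟩

lemma nbr_subset {T : SimpleGraph V} {S : Finset V} {v : V} : nbr T S v ⊆ S :=
  fun u hu => (mem_nbr.mp hu).2.1

lemma not_mem_nbr_self {T : SimpleGraph V} {S : Finset V} {v : V} : v ∉ nbr T S v :=
  fun h => (mem_nbr.mp h).2.2.1 rfl

lemma mem_nbr_comm {T : SimpleGraph V} {S : Finset V} {v u : V} :
    u ∈ nbr T S v ↔ v ∈ nbr T S u := by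
  simp only [mem_nbr]
  exact ⟨SAdj.symm, SAdj.symm⟩

noncomputable def degsum (T : SimpleGraph V) (S : Finset V) : ℕ :=
  ∑ v ∈ S, (nbr T S v).card

/-- On the full vertex set, `S`-adjacency is just adjacency. -/
lemma sadj_univ_iff [Fintype V] {T : SimpleGraph V} {u v : V} :
    SAdj T Finset.univ u v ↔ T.Adj u v := by
  constructor
  · rintro ⟨-, -, hne, p, hp, hint⟩
    cases p with
    | nil => exact absurd rfl hne
    | @cons _ x _ hadj q =>
      cases q with
      | nil => exact hadj
      | @cons _ y _ hadj' q' =>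
        exfalso
        have hxs : x ∈ (SimpleGraph.Walk.cons hadj (SimpleGraph.Walk.cons hadj' q')).support := by
          simp
        have hpath2 : (SimpleGraph.Walk.cons hadj' q').IsPath := hp.of_cons
        have hxu : x ≠ u := by
          have := hp.support_nodup
          rw [SimpleGraph.Walk.support_cons, List.nodup_cons] at this
          intro h; exact this.1 (h ▸ (SimpleGraph.Walk.start_mem_support _))
        have hxv : x ≠ v := by
          have := hpath2.support_nodup
          rw [SimpleGraph.Walk.support_cons, List.nodup_cons] at this
          intro h
          exact this.1 (h ▸ (SimpleGraph.Walk.end_mem_support q'))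
        exact hint x hxs hxu hxv (Finset.mem_univ x)
  · intro h
    refine ⟨Finset.mem_univ _, Finset.mem_univ _, h.ne, SimpleGraph.Walk.cons h SimpleGraph.Walk.nil, ?_, ?_⟩
    · simp [h.ne]
    · intro x hx hxu hxv
      simp only [SimpleGraph.Walk.support_cons, SimpleGraph.Walk.support_nil,
        List.mem_cons, List.mem_singleton] at hx
      rcases hx with h1 | h1 | h1
      · exact absurd h1 hxu
      · exact absurd h1 hxv
      · exact absurd h1 (by simp at h1)

lemma degsum_univ [Fintype V] {T : SimpleGraph V} (hT : T.IsTree) :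
    degsum T Finset.univ + 2 ≤ 2 * Fintype.card V := by
  classical
  have hnbr : ∀ v : V, nbr T Finset.univ v = T.neighborFinset v := by
    intro v
    ext u
    simp only [mem_nbr, SimpleGraph.mem_neighborFinset]
    exact ⟨fun h => sadj_univ_iff.mp h, fun h => sadj_univ_iff.mpr h⟩
  have h1 : degsum T Finset.univ = ∑ v, T.degree v := by
    apply Finset.sum_congr rfl
    intro v _
    rw [hnbr v]
    rfl
  rw [h1, SimpleGraph.sum_degrees_eq_twice_card_edges]
  have h2 := hT.card_edgeFinset
  omega

/-- Every vertex of a nontrivial `S` has an `S`-neighbour (connectivity). -/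
lemma exists_nbr {T : SimpleGraph V} (hT : T.Connected) {S : Finset V} {u w : V}
    (hu : u ∈ S) (hw : w ∈ S) (hne : u ≠ w) : (nbr T S u).Nonempty := by
  classical
  obtain ⟨p0⟩ := hT.preconnected u w
  -- strong induction on walk length
  suffices H : ∀ m : ℕ, ∀ w : V, w ∈ S → u ≠ w → ∀ p : T.Walk u w, p.length ≤ m →
      (nbr T S u).Nonempty by
    exact H p0.length w hw hne p0 le_rfl
  intro m
  induction m with
  | zero =>
    intro w hw hne p hl
    exact absurd (SimpleGraph.Walk.eq_of_length_eq_zero (Nat.le_zero.mp hl)) hne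
  | succ m ih =>
    intro w hw hne p hl
    set q := p.bypass with hq
    have hqp : q.IsPath := p.bypass_isPath
    by_cases hcase : ∀ x ∈ q.support, x ≠ u → x ≠ w → x ∉ S
    · exact ⟨w, mem_nbr.mpr ⟨hu, hw, hne, q, hqp, hcase⟩⟩
    · push_neg at hcase
      obtain ⟨x, hxsup, hxu, hxw, hxS⟩ := hcase
      have hlen : (q.takeUntil x hxsup).length ≤ m := by
        have h1 : (q.takeUntil x hxsup).length + (q.dropUntil x hxsup).length = q.length := by
          have := congrArg SimpleGraph.Walk.length (q.take_spec hxsup)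
          rwa [SimpleGraph.Walk.length_append] at this
        have h2 : (q.dropUntil x hxsup).length ≠ 0 := by
          intro h0
          exact hxw (SimpleGraph.Walk.eq_of_length_eq_zero h0)
        have h3 : q.length ≤ p.length := SimpleGraph.Walk.length_bypass_le p
        omega
      exact ih x hxS (Ne.symm hxu) (q.takeUntil x hxsup) hlen

/-- Splitting an `S.erase v`-adjacency into `S`-adjacencies. -/
lemma sadj_erase [DecidableEq V] {T : SimpleGraph V} {S : Finset V} {v u w : V}
    (hv : v ∈ S) (h : SAdj T (S.erase v) u w) :
    SAdj T S u w ∨ (SAdj T S u v ∧ SAdj T S v w) := by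
  obtain ⟨hu, hw, hne, p, hp, hint⟩ := h
  have huv : u ≠ v := (Finset.mem_erase.mp hu).1
  have hwv : w ≠ v := (Finset.mem_erase.mp hw).1
  have hu' : u ∈ S := Finset.mem_of_mem_erase hu
  have hw' : w ∈ S := Finset.mem_of_mem_erase hw
  by_cases hvp : v ∈ p.support
  · right
    set p1 := p.takeUntil v hvp with hp1def
    set p2 := p.dropUntil v hvp with hp2def
    have hp1 : p1.IsPath := hp.takeUntil hvp
    have hp2 : p2.IsPath := hp.dropUntil hvp
    have hsup : p1.support ++ p2.support.tail = p.support := by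
      rw [← SimpleGraph.Walk.support_append, SimpleGraph.Walk.take_spec]
    have hnd : (p1.support ++ p2.support.tail).Nodup := by
      rw [hsup]; exact hp.support_nodup
    have hdisj : ∀ x, x ∈ p1.support → x ∈ p2.support.tail → False := by
      intro x h1 h2
      exact (List.disjoint_of_nodup_append hnd) h1 h2
    have hp2supp : p2.support = v :: p2.support.tail := by
      exact (SimpleGraph.Walk.support_eq_cons p2) ▸ rfl
    constructor
    · refine ⟨hu', hv, huv, p1, hp1, ?_⟩
      intro x hx hxu hxv hxS
      have hxp : x ∈ p.support := SimpleGraph.Walk.support_takeUntil_subset p hvp hx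
      have hxw : x ≠ w := by
        intro hxw; subst hxw
        have hw2 : x ∈ p2.support := SimpleGraph.Walk.end_mem_support p2
        rw [hp2supp] at hw2
        rcases hw2 with _ | hw2
        · exact hxv rfl
        · exact hdisj x hx (by assumption)
      exact hint x hxp hxu hxw (Finset.mem_erase.mpr ⟨hxv, hxS⟩)
    · refine ⟨hv, hw', Ne.symm hwv, p2, hp2, ?_⟩
      intro x hx hxv hxw hxS
      have hxp : x ∈ p.support := SimpleGraph.Walk.support_dropUntil_subset p hvp hx
      have hxtail : x ∈ p2.support.tail := by
        rw [hp2supp] at hx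
        rcases hx with _ | hx
        · exact absurd rfl hxv
        · assumption
      have hxu : x ≠ u := by
        intro hxu; subst hxu
        exact hdisj x (SimpleGraph.Walk.start_mem_support p1) hxtail
      exact hint x hxp hxu hxw (Finset.mem_erase.mpr ⟨hxv, hxS⟩)
  · left
    refine ⟨hu', hw', hne, p, hp, ?_⟩
    intro x hx hxu hxw hxS
    have hxv : x ≠ v := fun h => hvp (h ▸ hx)
    exact hint x hx hxu hxw (Finset.mem_erase.mpr ⟨hxv, hxS⟩)

lemma nbr_erase_cases [DecidableEq V] {T : SimpleGraph V} {S : Finset V} {v u w : V}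
    (hv : v ∈ S) (h : w ∈ nbr T (S.erase v) u) :
    w ∈ (nbr T S u).erase v ∨ (u ∈ nbr T S v ∧ w ∈ (nbr T S v).erase u) := by
  have h' := mem_nbr.mp h
  have hwv : w ≠ v := (Finset.mem_erase.mp h'.2.1).1
  rcases sadj_erase hv h' with h1 | ⟨h1, h2⟩
  · exact Or.inl (Finset.mem_erase.mpr ⟨hwv, mem_nbr.mpr h1⟩)
  · refine Or.inr ⟨mem_nbr.mpr h1.symm, Finset.mem_erase.mpr ⟨(h'.2.2.1).symm, mem_nbr.mpr h2⟩⟩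

/-- Key counting estimate when removing a vertex. -/
lemma degsum_erase [DecidableEq V] {T : SimpleGraph V} {S : Finset V} {v : V}
    (hv : v ∈ S) :
    degsum T (S.erase v) + 2 * (nbr T S v).card ≤
      degsum T S + (nbr T S v).card * ((nbr T S v).card - 1) := by
  classical
  set d := (nbr T S v).card with hd
  have hnbrS' : nbr T S v ⊆ S.erase v := by
    intro u hu
    exact Finset.mem_erase.mpr ⟨fun h => not_mem_nbr_self (h ▸ hu), nbr_subset hu⟩
  -- pointwise bound
  have hpt : ∀ u ∈ S.erase v,
      (nbr T (S.erase v) u).card ≤ ((nbr T S u).erase v).card +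
        (if u ∈ nbr T S v then ((nbr T S v).erase u).card else 0) := by
    intro u hu
    by_cases hcase : u ∈ nbr T S v
    · rw [if_pos hcase]
      calc (nbr T (S.erase v) u).card
          ≤ ((nbr T S u).erase v ∪ (nbr T S v).erase u).card := by
            apply Finset.card_le_card
            intro w hw
            rcases nbr_erase_cases hv hw with h1 | ⟨_, h2⟩
            · exact Finset.mem_union_left _ h1
            · exact Finset.mem_union_right _ h2
        _ ≤ _ := Finset.card_union_le _ _
    · rw [if_neg hcase]
      apply Finset.card_le_card
      intro w hw
      rcases nbr_erase_cases hv hw with h1 | ⟨h2, _⟩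
      · exact h1
      · exact absurd h2 hcase
  have h1 : degsum T (S.erase v) ≤
      (∑ u ∈ S.erase v, ((nbr T S u).erase v).card) +
      (∑ u ∈ S.erase v, if u ∈ nbr T S v then ((nbr T S v).erase u).card else 0) := by
    rw [degsum, ← Finset.sum_add_distrib]
    exact Finset.sum_le_sum hpt
  -- second sum equals d * (d-1)
  have h2 : (∑ u ∈ S.erase v, if u ∈ nbr T S v then ((nbr T S v).erase u).card else 0)
      = d * (d - 1) := by
    rw [Finset.sum_ite_mem]
    rw [Finset.inter_eq_right.mpr hnbrS']
    rw [Finset.sum_congr rfl (fun u hu => by rw [Finset.card_erase_of_mem hu])]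
    rw [Finset.sum_const, smul_eq_mul]
  -- first sum: add back the erased v's
  have h3 : (∑ u ∈ S.erase v, ((nbr T S u).erase v).card) + d
      = ∑ u ∈ S.erase v, (nbr T S u).card := by
    have hterm : ∀ u ∈ S.erase v,
        ((nbr T S u).erase v).card + (if v ∈ nbr T S u then 1 else 0)
          = (nbr T S u).card := by
      intro u _
      by_cases hm : v ∈ nbr T S u
      · rw [if_pos hm, Finset.card_erase_of_mem hm]
        have : (nbr T S u).card ≠ 0 := Finset.card_ne_zero_of_mem hm
        omega
      · rw [if_neg hm, Finset.erase_eq_of_notMem hm, add_zero]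
    have hsum : (∑ u ∈ S.erase v, if v ∈ nbr T S u then 1 else 0) = d := by
      have : (∑ u ∈ S.erase v, if v ∈ nbr T S u then 1 else 0)
          = ∑ u ∈ S.erase v, if u ∈ nbr T S v then 1 else 0 := by
        apply Finset.sum_congr rfl
        intro u _
        exact if_congr mem_nbr_comm rfl rfl
      rw [this, Finset.sum_ite_mem, Finset.inter_eq_right.mpr hnbrS',
        Finset.sum_const, smul_eq_mul, mul_one]
    calc (∑ u ∈ S.erase v, ((nbr T S u).erase v).card) + d
        = (∑ u ∈ S.erase v, ((nbr T S u).erase v).card)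
          + (∑ u ∈ S.erase v, if v ∈ nbr T S u then 1 else 0) := by rw [hsum]
      _ = ∑ u ∈ S.erase v, (((nbr T S u).erase v).card + if v ∈ nbr T S u then 1 else 0) := by
          rw [Finset.sum_add_distrib]
      _ = ∑ u ∈ S.erase v, (nbr T S u).card := Finset.sum_congr rfl hterm
  have h4 : (∑ u ∈ S.erase v, (nbr T S u).card) + d = degsum T S := by
    rw [degsum, Finset.sum_erase_add _ _ hv]
  omega

/-- There is a vertex with small `S`-degree in both trees. -/
lemma exists_good_vertex {P Q : SimpleGraph V} {S : Finset V} (hS : S.Nonempty)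
    (hP : degsum P S + 2 ≤ 2 * S.card) (hQ : degsum Q S + 2 ≤ 2 * S.card) :
    ∃ v ∈ S, (nbr P S v).card + (nbr Q S v).card ≤ 3 := by
  by_contra hcon
  push_neg at hcon
  have h1 : S.card • 4 ≤ ∑ v ∈ S, ((nbr P S v).card + (nbr Q S v).card) :=
    Finset.card_nsmul_le_sum S _ 4 (fun v hv => hcon v hv)
  rw [Finset.sum_add_distrib, smul_eq_mul] at h1
  have hc : 1 ≤ S.card := Finset.card_pos.mpr hS
  have e1 : degsum P S = ∑ v ∈ S, (nbr P S v).card := rfl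
  have e2 : degsum Q S = ∑ v ∈ S, (nbr Q S v).card := rfl
  rw [e1] at hP
  rw [e2] at hQ
  omega

/-- Goodness of an ordering given as a list (each vertex has few `S`-neighbours in its
prefix, for both trees). -/
def Good [DecidableEq V] (P Q : SimpleGraph V) (l : List V) : Prop :=
  ∀ (i : ℕ) (h : i < l.length),
    (nbr P (l.take (i+1)).toFinset (l.get ⟨i, h⟩)).card +
    (nbr Q (l.take (i+1)).toFinset (l.get ⟨i, h⟩)).card ≤ 3

lemma main [DecidableEq V] {P Q : SimpleGraph V} (hPc : P.Connected) (hQc : Q.Connected) :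
    ∀ S : Finset V, degsum P S + 2 ≤ 2 * S.card → degsum Q S + 2 ≤ 2 * S.card →
      ∃ l : List V, l.Nodup ∧ l.toFinset = S ∧ Good P Q l := by
  intro S
  induction S using Finset.strongInduction with
  | _ S ih =>
    intro hP hQ
    have hcard : 1 ≤ S.card := by omega
    by_cases h1 : S.card = 1
    · obtain ⟨v, rfl⟩ := Finset.card_eq_one.mp h1
      refine ⟨[v], List.nodup_singleton v, by simp, ?_⟩
      intro i hi
      simp only [List.length_singleton] at hi
      have hi0 : i = 0 := by omega
      subst hi0
      have hempty : ∀ (T : SimpleGraph V), nbr T ([v].take 1).toFinset v = ∅ := by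
        intro T
        rw [Finset.eq_empty_iff_forall_notMem]
        intro u hu
        have h := mem_nbr.mp hu
        have h1' : u ∈ ([v].take 1).toFinset := h.2.1
        have hvv : u = v := by simpa using h1'
        exact h.2.2.1 hvv.symm
      simp only [List.get]
      rw [hempty P, hempty Q]
      simp
    · have hcard2 : 2 ≤ S.card := by omega
      obtain ⟨v, hv, hdeg⟩ := exists_good_vertex (Finset.card_pos.mp (by omega)) hP hQ
      -- degrees are between 1 and 2
      obtain ⟨wP, hwP, hwPne⟩ := Finset.exists_mem_ne (s := S) (by omega) v
      have hdP1 : 1 ≤ (nbr P S v).card :=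
        Finset.card_pos.mpr (exists_nbr hPc hv hwP (Ne.symm hwPne))
      have hdQ1 : 1 ≤ (nbr Q S v).card :=
        Finset.card_pos.mpr (exists_nbr hQc hv hwP (Ne.symm hwPne))
      have hdP2 : (nbr P S v).card ≤ 2 := by omega
      have hdQ2 : (nbr Q S v).card ≤ 2 := by omega
      have hquad : ∀ d : ℕ, 1 ≤ d → d ≤ 2 → d * (d - 1) + 2 ≤ 2 * d := by
        intro d h1 h2
        have : d = 1 ∨ d = 2 := by omega
        rcases this with rfl | rfl <;> norm_num
      have hcerase : (S.erase v).card = S.card - 1 := Finset.card_erase_of_mem hv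
      have hinvP : degsum P (S.erase v) + 2 ≤ 2 * (S.erase v).card := by
        have hde := degsum_erase (T := P) hv
        have hq := hquad _ hdP1 hdP2
        set e := (nbr P S v).card * ((nbr P S v).card - 1) with he
        omega
      have hinvQ : degsum Q (S.erase v) + 2 ≤ 2 * (S.erase v).card := by
        have hde := degsum_erase (T := Q) hv
        have hq := hquad _ hdQ1 hdQ2
        set e := (nbr Q S v).card * ((nbr Q S v).card - 1) with he
        omega
      obtain ⟨l', hnd', htf', hgood'⟩ := ih (S.erase v) (Finset.erase_ssubset hv) hinvP hinvQ
      have hvl' : v ∉ l' := by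
        intro h
        have : v ∈ S.erase v := htf' ▸ List.mem_toFinset.mpr h
        exact (Finset.notMem_erase v S) this
      refine ⟨l' ++ [v], ?_, ?_, ?_⟩
      · rw [List.nodup_append]
        exact ⟨hnd', List.nodup_singleton v, by
          intro a ha b hb
          simp only [List.mem_singleton] at hb
          subst hb; rintro rfl; exact hvl' ha⟩
      · rw [List.toFinset_append]
        simp only [List.toFinset_cons, List.toFinset_nil, insert_empty_eq]
        rw [htf', Finset.union_comm]
        rw [show ({v} : Finset V) ∪ S.erase v = insert v (S.erase v) from rfl, Finset.insert_erase hv]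
      · intro i hi
        rw [List.length_append, List.length_singleton] at hi
        by_cases hlt : i < l'.length
        · have htake : (l' ++ [v]).take (i+1) = l'.take (i+1) :=
            List.take_append_of_le_length (by omega)
          have hget : (l' ++ [v]).get ⟨i, by simp; omega⟩ = l'.get ⟨i, hlt⟩ := by
            simp [List.getElem_append_left hlt]
          simp only [htake]
          rw [show ((l' ++ [v]).get ⟨i, by simp; omega⟩) = l'.get ⟨i, hlt⟩ from hget]
          exact hgood' i hlt
        · have hieq : i = l'.length := by omega
          subst hieq
          have htake : (l' ++ [v]).take (l'.length + 1) = l' ++ [v] := by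
            apply List.take_of_length_le
            simp
          have hget : (l' ++ [v]).get ⟨l'.length, by simp⟩ = v := by
            simp
          have htf : (l' ++ [v]).toFinset = S := by
            rw [List.toFinset_append]
            simp only [List.toFinset_cons, List.toFinset_nil, insert_empty_eq]
            rw [htf', Finset.union_comm]
            rw [show ({v} : Finset V) ∪ S.erase v = insert v (S.erase v) from rfl, Finset.insert_erase hv]
          simp only [htake, hget, htf]
          exact hdeg

end TwoTreesAux

open TwoTreesAux in
/-- **Ordering lemma for two trees.**
Given two trees `TP` and `TQ` on the same set of `n` nodes, the nodes can be ordered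
(via a bijection `σ : Fin n ≃ V`) so that for every `i` the set
`D_{TP}(X_i) ∪ D_{TQ}(X_i)` has cardinality at most `5`. -/
theorem two_trees_ordering {V : Type*} [Fintype V]
    (TP TQ : SimpleGraph V) (hTP : TP.IsTree) (hTQ : TQ.IsTree)
    {n : ℕ} (hn : n = Fintype.card V) :
    ∃ σ : Fin n ≃ V, ∀ i : Fin n,
      (depSet TP σ i ∪ depSet TQ σ i).ncard ≤ 5 := by
  classical
  obtain ⟨l, hnd, htf, hgood⟩ :=
    main hTP.isConnected hTQ.isConnected Finset.univ
      (by simpa [hn, Finset.card_univ] using degsum_univ hTP)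
      (by simpa [hn, Finset.card_univ] using degsum_univ hTQ)
  have hlen : l.length = n := by
    rw [hn, ← Finset.card_univ, ← htf, List.card_toFinset, hnd.dedup]
  -- the ordering
  have hbij : Function.Bijective (fun i : Fin n => l.get (Fin.cast hlen.symm i)) := by
    rw [Fintype.bijective_iff_injective_and_card]
    constructor
    · intro a b hab
      have := (List.nodup_iff_injective_get.mp hnd) hab
      exact Fin.cast_injective _ (by exact this)
    · simp [hn]
  refine ⟨Equiv.ofBijective _ hbij, ?_⟩
  intro i
  set σ := Equiv.ofBijective _ hbij with hσ
  have hσval : ∀ j : Fin n, σ j = l.get (Fin.cast hlen.symm j) := fun j => rfl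
  set Si : Finset V := (l.take ((i : ℕ)+1)).toFinset with hSi
  have hmemSi : ∀ j : Fin n, j ≤ i → σ j ∈ Si := by
    intro j hj
    rw [hσval]
    apply List.mem_toFinset.mpr
    have hjlt : (j : ℕ) < (l.take ((i : ℕ)+1)).length := by
      rw [List.length_take]
      have : (j : ℕ) < n := j.isLt
      have : (i : ℕ) < n := i.isLt
      omega
    have : (l.take ((i : ℕ)+1)).get ⟨(j : ℕ), hjlt⟩ = l.get (Fin.cast hlen.symm j) := by
      simp [List.getElem_take]
    rw [← this]
    exact List.get_mem _ _
  have hSimem : ∀ x ∈ Si, ∃ j : Fin n, j ≤ i ∧ σ j = x := by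
    intro x hx
    rw [hSi] at hx
    obtain ⟨jj, hjj, hjx⟩ := List.mem_iff_getElem.mp (List.mem_toFinset.mp hx)
    rw [List.length_take] at hjj
    have hjn : jj < n := by omega
    refine ⟨⟨jj, hjn⟩, ?_, ?_⟩
    · have hle : jj ≤ (i : ℕ) := by omega
      exact Fin.le_def.mpr (by simpa using hle)
    · rw [hσval]
      rw [← hjx]
      simp [List.getElem_take]
  -- dependent sets land in the neighbour finsets
  have hdep : ∀ (T : SimpleGraph V), T.IsTree →
      depSet T σ i ⊆ σ ⁻¹' ↑(nbr T Si (σ i)) := by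
    intro T hT k hk
    obtain ⟨hki, hcond⟩ := hk
    obtain ⟨w⟩ := hT.isConnected.preconnected (σ i) (σ k)
    have hp : w.bypass.IsPath := w.bypass_isPath
    have hkey := hcond w.bypass hp
    simp only [Set.mem_preimage, Finset.coe_insert, Finset.mem_coe]
    apply mem_nbr.mpr
    have hne : σ i ≠ σ k := fun h => (ne_of_gt hki) (σ.injective h)
    refine ⟨hmemSi i le_rfl, hmemSi k (le_of_lt hki), hne, w.bypass, hp, ?_⟩
    intro x hx hxi hxk hxS
    obtain ⟨j, hji, hjx⟩ := hSimem x hxS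
    rcases lt_or_eq_of_le hji with hlt | heq
    · have hjk := hkey j hlt (by rw [hjx]; exact hx)
      exact hxk (by rw [← hjx, hjk])
    · exact hxi (by rw [← hjx, heq])
  have hsub : depSet TP σ i ∪ depSet TQ σ i ⊆
      σ ⁻¹' ↑(nbr TP Si (σ i) ∪ nbr TQ Si (σ i)) := by
    intro k hk
    rcases hk with hk | hk
    · have := hdep TP hTP hk
      simp only [Set.mem_preimage, Finset.coe_union, Set.mem_union, Finset.mem_coe] at this ⊢
      exact Or.inl this
    · have := hdep TQ hTQ hk
      simp only [Set.mem_preimage, Finset.coe_union, Set.mem_union, Finset.mem_coe] at this ⊢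
      exact Or.inr this
  have hcard : (σ ⁻¹' ↑(nbr TP Si (σ i) ∪ nbr TQ Si (σ i))).ncard
      = (nbr TP Si (σ i) ∪ nbr TQ Si (σ i)).card := by
    have himg : σ ⁻¹' ↑(nbr TP Si (σ i) ∪ nbr TQ Si (σ i))
        = σ.symm '' ↑(nbr TP Si (σ i) ∪ nbr TQ Si (σ i)) := by
      ext x
      simp only [Set.mem_preimage, Set.mem_image, Finset.mem_coe]
      constructor
      · intro h; exact ⟨σ x, h, by simp⟩
      · rintro ⟨y, hy, rfl⟩; simpa using hy
    rw [himg, Set.ncard_image_of_injective _ σ.symm.injective, Set.ncard_coe_finset]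
  calc (depSet TP σ i ∪ depSet TQ σ i).ncard
      ≤ (σ ⁻¹' ↑(nbr TP Si (σ i) ∪ nbr TQ Si (σ i))).ncard :=
        Set.ncard_le_ncard hsub (Set.toFinite _)
    _ = (nbr TP Si (σ i) ∪ nbr TQ Si (σ i)).card := hcard
    _ ≤ (nbr TP Si (σ i)).card + (nbr TQ Si (σ i)).card := Finset.card_union_le _ _
    _ ≤ 5 := by
        have hgl := hgood (i : ℕ) (by omega)
        have hSieq : Si = (l.take ((i : ℕ)+1)).toFinset := rfl
        have hveq : σ i = l.get ⟨(i : ℕ), by omega⟩ := by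
          rw [hσval]; rfl
        rw [hSieq, hveq]
        omega
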